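/- Let ℓ ≥ 1 and let e_1,…,e_ℓ be the standard orthonormal basis of ℂ^ℓ. Let ω = e^{2πi/3} and define the finite set 𝒩 = {e_j : j ∈ [ℓ]} ∪ {e_j + ω^a e_k : j,k ∈ [ℓ], j ≠ k, a ∈ {0,1,2}}. Then for every matrix B ∈ ℂ^{ℓ×ℓ}, the operator norm satisfies ‖B‖ ≤ ℓ · max_{v ∈ 𝒩} |v* B v|. -/

import Mathlib

open MeasureTheory Matrix Filter
open scoped Pointwise

noncomputable section

/-- Operator (spectral) norm of a square complex matrix. -/
def opNorm {m : ℕ} (M : Matrix (Fin m) (Fin m) ℂ) : ℝ :=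
  ‖Matrix.toEuclideanCLM (𝕜 := ℂ) M‖

/-- The quadratic form `x* M x`. -/
def qform {m : ℕ} (M : Matrix (Fin m) (Fin m) ℂ) (x : Fin m → ℂ) : ℂ :=
  dotProduct (star x) (M.mulVec x)

/-- The primitive cube root of unity `ω = e^{2πi/3}`. -/
def omega3 : ℂ := Complex.exp (2 * Real.pi * Complex.I / 3)

/-- The net `𝒩 = {e_j} ∪ {e_j + ω^a e_k : j ≠ k, a ∈ {0,1,2}}`. -/
def netN (ℓ : ℕ) : Set (Fin ℓ → ℂ) :=
  {v | (∃ j : Fin ℓ, v = Pi.single j 1) ∨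
    (∃ j k : Fin ℓ, j ≠ k ∧ ∃ a : Fin 3,
      v = Pi.single j 1 + Pi.single k (omega3 ^ (a : ℕ)))}

end

/- Auxiliary lemmas -/

lemma omega3_prim : IsPrimitiveRoot omega3 3 := by
  have := Complex.isPrimitiveRoot_exp 3 (by norm_num)
  simpa [omega3] using this

lemma omega3_pow3 : omega3 ^ 3 = 1 := omega3_prim.pow_eq_one

lemma omega3_ne_one : omega3 ≠ 1 := omega3_prim.ne_one (by norm_num)

lemma omega3_sum : 1 + omega3 + omega3 ^ 2 = 0 := by
  have h := geom_sum_eq omega3_ne_one 3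
  rw [omega3_pow3] at h
  simp at h
  calc 1 + omega3 + omega3 ^ 2 = ∑ i ∈ Finset.range 3, omega3 ^ i := by
        rw [Finset.sum_range_succ, Finset.sum_range_succ, Finset.sum_range_one]; ring
    _ = 0 := h

lemma omega3_abs : ‖omega3‖ = 1 := by
  rw [omega3, Complex.norm_exp]
  norm_num [Complex.div_re, Complex.mul_re, Complex.mul_im]

lemma omega3_conj : starRingEnd ℂ omega3 = omega3 ^ 2 := by
  have h1 : omega3 * starRingEnd ℂ omega3 = 1 := by
    rw [Complex.mul_conj]
    norm_cast
    simp [← Complex.sq_norm, omega3_abs]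
  have h2 : omega3 * omega3 ^ 2 = 1 := by rw [← pow_succ']; exact omega3_pow3
  have h0 : omega3 ≠ 0 := omega3_prim.ne_zero (by norm_num)
  rw [← h2] at h1
  exact mul_left_cancel₀ h0 h1

lemma qform_add {m : ℕ} (B : Matrix (Fin m) (Fin m) ℂ) (x y : Fin m → ℂ) :
    qform B (x + y) = qform B x + qform B y
      + dotProduct (star x) (B.mulVec y) + dotProduct (star y) (B.mulVec x) := by
  simp [qform, star_add, mulVec_add, dotProduct_add, add_dotProduct]; ring

lemma star_single' {m : ℕ} (j : Fin m) (c : ℂ) :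
    star (Pi.single j c : Fin m → ℂ) = Pi.single j (starRingEnd ℂ c) := by
  ext p; by_cases h : p = j <;> simp [Pi.single_apply, h, Pi.star_apply]

lemma cross {m : ℕ} (B : Matrix (Fin m) (Fin m) ℂ) (j k : Fin m) (a c : ℂ) :
    dotProduct (star (Pi.single j a : Fin m → ℂ)) (B.mulVec (Pi.single k c)) =
      (starRingEnd ℂ a) * B j k * c := by
  rw [star_single']
  simp [Matrix.mulVec_single, single_dotProduct]
  ring

lemma qform_single {m : ℕ} (B : Matrix (Fin m) (Fin m) ℂ) (j : Fin m) :
    qform B (Pi.single j 1) = B j j := by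
  simp [qform, dotProduct, Matrix.mulVec, Pi.single_apply, apply_ite,
    Finset.sum_ite_eq']

lemma qform_pair {m : ℕ} (B : Matrix (Fin m) (Fin m) ℂ) (j k : Fin m) (c : ℂ) :
    qform B (Pi.single j 1 + Pi.single k c) =
      B j j + c * B j k + (starRingEnd ℂ c) * B k j + ((starRingEnd ℂ c) * c) * B k k := by
  rw [qform_add, cross, cross]
  have h2 : qform B (Pi.single k c) = (starRingEnd ℂ c) * c * B k k := by
    simp only [qform]
    rw [star_single']
    simp [Matrix.mulVec_single, single_dotProduct]
    ring
  rw [qform_single, h2]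
  simp only [_root_.map_one]
  ring

/-- net construction: for every `B ∈ ℂ^{ℓ×ℓ}`,
`‖B‖ ≤ ℓ · max_{v ∈ 𝒩} |v* B v|`. -/
theorem stmt0 (ℓ : ℕ) (hℓ : 1 ≤ ℓ) (B : Matrix (Fin ℓ) (Fin ℓ) ℂ) :
    opNorm B ≤ (ℓ : ℝ) * ⨆ v ∈ netN ℓ, ‖qform B v‖ := by
  classical
  set M : ℝ := ⨆ v ∈ netN ℓ, ‖qform B v‖ with hM
  set C : ℝ := ∑ p : Fin ℓ, ∑ q : Fin ℓ, ‖B p q‖ with hC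
  have hCnonneg : 0 ≤ C := by positivity
  -- entries of net vectors are bounded by 1 in absolute value
  have hnet_entry : ∀ v ∈ netN ℓ, ∀ p, ‖v p‖ ≤ 1 := by
    rintro v (⟨j, rfl⟩ | ⟨j, k, hjk, a, rfl⟩) p
    · by_cases h : p = j <;> simp [Pi.single_apply, h]
    · have hwa : ‖omega3 ^ (a : ℕ)‖ = 1 := by
        rw [norm_pow, omega3_abs, one_pow]
      by_cases h1 : p = j
      · subst h1
        simp [Pi.single_apply, hjk]
      · by_cases h2 : p = k
        · subst h2
          simp [Pi.single_apply, h1, hwa]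
        · simp [Pi.single_apply, h1, h2]
  -- uniform bound on |qform| over the net
  have hqbound : ∀ v ∈ netN ℓ, ‖qform B v‖ ≤ C := by
    intro v hv
    have : ‖qform B v‖ ≤
        ∑ p : Fin ℓ, ∑ q : Fin ℓ, ‖v p‖ * ‖B p q‖ * ‖v q‖ := by
      simp only [qform, dotProduct, Matrix.mulVec]
      refine (norm_sum_le _ _).trans (Finset.sum_le_sum fun p _ => ?_)
      rw [norm_mul]
      calc ‖star v p‖ * ‖∑ q, B p q * v q‖
          ≤ ‖star v p‖ * ∑ q, ‖B p q * v q‖ :=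
            mul_le_mul_of_nonneg_left (norm_sum_le _ _) (by positivity)
        _ = ∑ q, ‖v p‖ * (‖B p q‖ * ‖v q‖) := by
            rw [Finset.mul_sum]
            refine Finset.sum_congr rfl fun q _ => ?_
            rw [norm_mul]
            simp [Pi.star_apply, Complex.norm_conj]
        _ = ∑ q, ‖v p‖ * ‖B p q‖ * ‖v q‖ := by
            simp [mul_assoc]
    refine this.trans (Finset.sum_le_sum fun p _ => Finset.sum_le_sum fun q _ => ?_)
    calc ‖v p‖ * ‖B p q‖ * ‖v q‖
        ≤ 1 * ‖B p q‖ * 1 := by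
          apply mul_le_mul
          · exact mul_le_mul_of_nonneg_right (hnet_entry v hv p) (by positivity)
          · exact hnet_entry v hv q
          · positivity
          · positivity
      _ = ‖B p q‖ := by ring
  -- the (conditionally complete) sup is well-behaved
  have hbdd : BddAbove (Set.range fun v => ⨆ _ : v ∈ netN ℓ, ‖qform B v‖) := by
    refine ⟨C, ?_⟩
    rintro x ⟨v, rfl⟩
    dsimp only
    by_cases hv : v ∈ netN ℓ
    · rw [ciSup_pos hv]; exact hqbound v hv
    · haveI : IsEmpty (v ∈ netN ℓ) := ⟨hv⟩
      rw [Real.iSup_of_isEmpty]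
      exact hCnonneg
  have hle : ∀ v ∈ netN ℓ, ‖qform B v‖ ≤ M := by
    intro v hv
    have h := le_ciSup hbdd v
    rwa [ciSup_pos hv] at h
  -- M is nonnegative
  have hMnonneg : 0 ≤ M := by
    have hmem : (Pi.single (⟨0, hℓ⟩ : Fin ℓ) 1 : Fin ℓ → ℂ) ∈ netN ℓ := Or.inl ⟨_, rfl⟩
    exact le_trans (by positivity) (hle _ hmem)
  -- every entry of B is bounded by M
  have hent : ∀ p q : Fin ℓ, ‖B p q‖ ≤ M := by
    intro p q
    by_cases hpq : p = q
    · subst hpq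
      have hmem : (Pi.single p 1 : Fin ℓ → ℂ) ∈ netN ℓ := Or.inl ⟨p, rfl⟩
      have := hle _ hmem
      rwa [qform_single] at this
    · -- off-diagonal: use the three net vectors with cube roots of unity
      set w : ℂ := omega3 with hw
      have hqa : ∀ a : Fin 3, qform B (Pi.single p 1 + Pi.single q (w ^ (a : ℕ))) =
          B p p + w ^ (a:ℕ) * B p q + w ^ (2*(a:ℕ)) * B q p + w ^ (3*(a:ℕ)) * B q q := by
        intro a
        rw [qform_pair]
        have hconj : starRingEnd ℂ (w ^ (a:ℕ)) = w ^ (2*(a:ℕ)) := by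
          rw [map_pow, omega3_conj, ← pow_mul, mul_comm]
        rw [hconj, ← pow_add]
        have h23 : 2*(a:ℕ) + (a:ℕ) = 3*(a:ℕ) := by ring
        rw [h23]
      have hmem : ∀ a : Fin 3,
          (Pi.single p 1 + Pi.single q (w ^ (a : ℕ)) : Fin ℓ → ℂ) ∈ netN ℓ :=
        fun a => Or.inr ⟨p, q, hpq, a, rfl⟩
      have h0 := hqa 0
      have h1 := hqa 1
      have h2 := hqa 2
      have hA0 := hle _ (hmem 0)
      have hA1 := hle _ (hmem 1)
      have hA2 := hle _ (hmem 2)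
      simp only [Fin.val_zero, Fin.val_one, Fin.val_two, pow_zero, pow_one, one_mul,
        mul_zero, mul_one] at h0 h1 h2 hA0 hA1 hA2
      rw [h0] at hA0
      rw [h1] at hA1
      rw [h2] at hA2
      have hs : 1 + w + w ^ 2 = 0 := omega3_sum
      have h3 : w ^ 3 = 1 := omega3_pow3
      have hkey : 3 * B p q =
          (B p p + B p q + B q p + B q q)
          + w ^ 2 * (B p p + w * B p q + w ^ 2 * B q p + w ^ 3 * B q q)
          + w * (B p p + w ^ 2 * B p q + w ^ (2*2) * B q p + w ^ (3*2) * B q q) := by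
        linear_combination (-(B p p) - B q p - B q q) * hs +
          (-(2 * B p q) - (w + w ^ 2) * B q p - (w ^ 2 + w * (w ^ 3 + 1)) * B q q) * h3
      have habsw : ‖w‖ = 1 := omega3_abs
      have h3M : (3 : ℝ) * ‖B p q‖ ≤ 3 * M := by
        calc (3:ℝ) * ‖B p q‖ = ‖3 * B p q‖ := by
              rw [norm_mul]; norm_num
          _ ≤ ‖B p p + B p q + B q p + B q q‖
              + ‖w ^ 2 * (B p p + w * B p q + w ^ 2 * B q p + w ^ 3 * B q q)‖
              + ‖w * (B p p + w ^ 2 * B p q + w ^ (2*2) * B q p + w ^ (3*2) * B q q)‖ := by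
              rw [hkey]
              exact (norm_add_le _ _).trans (add_le_add_left (norm_add_le _ _) _)
          _ = ‖B p p + B p q + B q p + B q q‖
              + ‖B p p + w * B p q + w ^ 2 * B q p + w ^ 3 * B q q‖
              + ‖B p p + w ^ 2 * B p q + w ^ (2*2) * B q p + w ^ (3*2) * B q q‖ := by
              rw [norm_mul, norm_mul, norm_pow, habsw]
              ring
          _ ≤ M + M + M := add_le_add (add_le_add hA0 hA1) hA2
          _ = 3 * M := by ring
      linarith
  -- conclude: operator norm bounded by ℓ * M
  have key : ∀ x : EuclideanSpace ℂ (Fin ℓ),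
      ‖Matrix.toEuclideanCLM (𝕜 := ℂ) B x‖ ≤ ((ℓ : ℝ) * M) * ‖x‖ := by
    intro x
    set y := Matrix.toEuclideanCLM (𝕜 := ℂ) B x with hy
    have hyx : ∀ p, y p = ∑ q, B p q * x q := by
      intro p
      have := congrFun (Matrix.ofLp_toEuclideanCLM (𝕜 := ℂ) B x) p
      exact this.trans (by simp [Matrix.mulVec, dotProduct])
    set s : ℝ := ∑ q, ‖x q‖ with hs
    have hyp : ∀ p, ‖y p‖ ≤ M * s := by
      intro p
      rw [hyx p]
      calc ‖∑ q, B p q * x q‖ ≤ ∑ q, ‖B p q * x q‖ :=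
            norm_sum_le _ _
        _ ≤ ∑ q, M * ‖x q‖ := Finset.sum_le_sum fun q _ => by
            rw [norm_mul]
            exact mul_le_mul_of_nonneg_right (hent p q) (by positivity)
        _ = M * s := by rw [Finset.mul_sum]
    have hx2 : ‖x‖ ^ 2 = ∑ q, ‖x q‖ ^ 2 := by
      rw [EuclideanSpace.norm_eq, Real.sq_sqrt (by positivity)]
    have hs2 : s ^ 2 ≤ (ℓ : ℝ) * ‖x‖ ^ 2 := by
      rw [hx2, hs]
      have := sq_sum_le_card_mul_sum_sq (s := (Finset.univ : Finset (Fin ℓ)))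
        (f := fun q => ‖x q‖)
      simpa using this
    have hy2 : ‖y‖ ^ 2 ≤ ((ℓ : ℝ) * M) ^ 2 * ‖x‖ ^ 2 := by
      have h1 : ‖y‖ ^ 2 = ∑ p, ‖y p‖ ^ 2 := by
        rw [EuclideanSpace.norm_eq, Real.sq_sqrt (by positivity)]
      rw [h1]
      calc ∑ p, ‖y p‖ ^ 2 ≤ ∑ _p : Fin ℓ, (M * s) ^ 2 :=
            Finset.sum_le_sum fun p _ => by
              have := hyp p
              have h0 : (0:ℝ) ≤ ‖y p‖ := by positivity
              nlinarith
        _ = (ℓ : ℝ) * (M * s) ^ 2 := by simp [Finset.sum_const, mul_comm]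
        _ = (ℓ : ℝ) * M ^ 2 * s ^ 2 := by ring
        _ ≤ (ℓ : ℝ) * M ^ 2 * ((ℓ : ℝ) * ‖x‖ ^ 2) := by
            apply mul_le_mul_of_nonneg_left hs2
            positivity
        _ = ((ℓ : ℝ) * M) ^ 2 * ‖x‖ ^ 2 := by ring
    have hnn : (0:ℝ) ≤ ((ℓ : ℝ) * M) * ‖x‖ := by positivity
    nlinarith [norm_nonneg y]
  exact ContinuousLinearMap.opNorm_le_bound _ (by positivity) key
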